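/- arXiv:1908.00306 — 2 statements merged into one kernel-verified Lean document; each statement's English description precedes it below -/
import Mathlib

section
/- Let ψ : ℝ → ℝ be twice continuously differentiable with ψ(x) ≥ 0 for all x ∈ ℝ, and suppose there exists C₁ > 0 such that |ψ''(x)| ≤ C₁(1 + |ψ'(x)|) for all x ∈ ℝ. Then there exists a constant C > 0, depending only on C₁, such that |ψ'(x)| ≤ C(1 + ψ(x)) for every x ∈ ℝ. -/
open Real Set intervalIntegral

private lemma exp_eighth_le_two : Real.exp (1/8 : ℝ) ≤ 2 := by
  have h := Real.add_one_le_exp (-(1/8) : ℝ)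
  have hpos : (0:ℝ) < 7/8 := by norm_num
  have h2 : (7/8 : ℝ) ≤ Real.exp (-(1/8)) := by linarith
  have h3 : Real.exp (1/8 : ℝ) = (Real.exp (-(1/8)))⁻¹ := by
    rw [← Real.exp_neg]; norm_num
  rw [h3]
  have : (Real.exp (-(1/8)))⁻¹ ≤ (7/8 : ℝ)⁻¹ := by
    exact inv_anti₀ hpos h2
  calc (Real.exp (-(1/8)))⁻¹ ≤ (7/8 : ℝ)⁻¹ := this
    _ ≤ 2 := by norm_num

private lemma key_lemma (C₁ : ℝ) (hC₁ : 0 < C₁) (ψ : ℝ → ℝ) (hψ : ContDiff ℝ 2 ψ)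
    (hpos : ∀ x : ℝ, 0 ≤ ψ x)
    (hbd : ∀ x : ℝ, |deriv (deriv ψ) x| ≤ C₁ * (1 + |deriv ψ x|))
    (x : ℝ) (hx : 1 ≤ deriv ψ x) :
    deriv ψ x ≤ 16 * C₁ * ψ x := by
  set d1 := deriv ψ with hd1def
  set d2 := deriv d1 with hd2def
  -- regularity
  obtain ⟨hψdiff, -, hd1smooth⟩ := (contDiff_succ_iff_deriv (n := 1) (f := ψ)).mp
    (by exact_mod_cast hψ)
  have hd1diff : Differentiable ℝ d1 := hd1smooth.differentiable one_ne_zero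
  have hd1cont : Continuous d1 := hd1diff.continuous
  have hd2cont : Continuous d2 := (contDiff_one_iff_deriv.mp hd1smooth).2
  set t₀ : ℝ := 1 / (8 * C₁) with ht₀def
  have ht₀ : 0 < t₀ := by positivity
  set δ : ℝ := d1 x with hδdef
  have hδ1 : 1 ≤ δ := hx
  -- f t = ψ'(x - t)
  set f : ℝ → ℝ := fun t => d1 (x - t) with hfdef
  have hf' : ∀ t : ℝ, HasDerivAt f (-d2 (x - t)) t := by
    intro t
    have hinner : HasDerivAt (fun t : ℝ => x - t) (-1) t := (hasDerivAt_id t).const_sub x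
    have := ((hd1diff (x - t)).hasDerivAt).comp t hinner
    have h2 : HasDerivAt f (deriv d1 (x - t) * -1) t := this
    simpa [mul_comm] using h2
  have hfcont : Continuous f := hd1cont.comp (by continuity)
  -- Gronwall bound
  have hg : ∀ t ∈ Icc (0:ℝ) t₀, |f t| ≤ gronwallBound δ C₁ C₁ t := by
    intro t ht
    have := norm_le_gronwallBound_of_norm_deriv_right_le (f := f)
      (f' := fun t => -d2 (x - t)) (δ := δ) (K := C₁) (ε := C₁) (a := 0) (b := t₀)
      (hfcont.continuousOn)
      (fun s _ => (hf' s).hasDerivWithinAt)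
      (by simp [hfdef, hδdef, abs_of_nonneg (le_trans zero_le_one hx),
        abs_of_nonneg (show (0:ℝ) ≤ d1 x from le_trans zero_le_one hx)])
      (fun s _ => by
        have := hbd (x - s)
        simp only [Real.norm_eq_abs, abs_neg]
        calc |d2 (x - s)| ≤ C₁ * (1 + |d1 (x - s)|) := this
          _ = C₁ * |f s| + C₁ := by ring)
      t ht
    simpa using this
  -- numeric bound: gronwallBound δ C₁ C₁ t ≤ 3δ on [0,t₀]
  have hM : ∀ t ∈ Icc (0:ℝ) t₀, |f t| ≤ 3 * δ := by
    intro t ht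
    refine le_trans (hg t ht) ?_
    rw [gronwallBound_of_K_ne_0 (ne_of_gt hC₁)]
    have hC₁t : C₁ * t ≤ 1/8 := by
      have := ht.2
      calc C₁ * t ≤ C₁ * t₀ := by nlinarith [ht.2]
        _ = 1/8 := by rw [ht₀def]; field_simp
    have hexp : Real.exp (C₁ * t) ≤ 2 :=
      le_trans (Real.exp_le_exp.mpr hC₁t) exp_eighth_le_two
    have hexp0 : (0:ℝ) < Real.exp (C₁ * t) := Real.exp_pos _
    have hdiv : C₁ / C₁ = 1 := div_self (ne_of_gt hC₁)
    simp only [hdiv]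
    nlinarith
  -- lower bound: f t ≥ δ/2 on [0,t₀]
  have hlow : ∀ t ∈ Icc (0:ℝ) t₀, δ / 2 ≤ f t := by
    intro t ht
    have hFTC : ∫ s in (0:ℝ)..t, -d2 (x - s) = f t - f 0 := by
      apply integral_eq_sub_of_hasDerivAt (fun s _ => hf' s)
      exact ((hd2cont.comp (continuous_const.sub continuous_id)).neg).intervalIntegrable 0 t
    have hptw : ∀ s ∈ Icc (0:ℝ) t, -(4 * C₁ * δ) ≤ -d2 (x - s) := by
      intro s hs
      have hsmem : s ∈ Icc (0:ℝ) t₀ := ⟨hs.1, le_trans hs.2 ht.2⟩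
      have h1 := hbd (x - s)
      have h2 : |d1 (x - s)| ≤ 3 * δ := hM s hsmem
      have h3 : |d2 (x - s)| ≤ C₁ * (1 + 3 * δ) := by
        refine le_trans h1 ?_
        have : (0:ℝ) < C₁ := hC₁
        nlinarith
      have habs := abs_le.mp h3
      nlinarith
    have hint : -(4 * C₁ * δ) * t ≤ ∫ s in (0:ℝ)..t, -d2 (x - s) := by
      have := integral_mono_on (a := 0) (b := t) (μ := MeasureTheory.volume)
        (f := fun _ => -(4 * C₁ * δ)) (g := fun s => -d2 (x - s)) ht.1
        (intervalIntegrable_const)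
        (((hd2cont.comp (continuous_const.sub continuous_id)).neg).intervalIntegrable 0 t)
        hptw
      calc -(4 * C₁ * δ) * t = (t - 0) • (-(4 * C₁ * δ)) := by
            simp [smul_eq_mul]; ring
        _ = ∫ _ in (0:ℝ)..t, -(4 * C₁ * δ) := (intervalIntegral.integral_const _).symm
        _ ≤ _ := this
    have hf0 : f 0 = δ := by simp [hfdef, hδdef]
    have htb : t ≤ t₀ := ht.2
    have h4 : 4 * C₁ * δ * t ≤ 4 * C₁ * δ * t₀ := by
      have : 0 ≤ 4 * C₁ * δ := by nlinarith
      nlinarith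
    have h5 : 4 * C₁ * δ * t₀ = δ / 2 := by
      rw [ht₀def]; field_simp; ring
    nlinarith [hFTC, hint]
  -- integrate ψ' over [x - t₀, x]
  have hFTC2 : ∫ y in (x - t₀)..x, d1 y = ψ x - ψ (x - t₀) := by
    apply integral_eq_sub_of_hasDerivAt (fun y _ => (hψdiff y).hasDerivAt)
    exact hd1cont.intervalIntegrable _ _
  have hintlow : t₀ * (δ / 2) ≤ ∫ y in (x - t₀)..x, d1 y := by
    have hab : x - t₀ ≤ x := by linarith
    have := integral_mono_on (a := x - t₀) (b := x) (μ := MeasureTheory.volume)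
      (f := fun _ => δ / 2) (g := d1) hab
      intervalIntegrable_const
      (hd1cont.intervalIntegrable _ _)
      (fun y hy => by
        have hmem : x - y ∈ Icc (0:ℝ) t₀ := ⟨by linarith [hy.2], by linarith [hy.1]⟩
        have := hlow (x - y) hmem
        simpa [hfdef] using this)
    calc t₀ * (δ / 2) = (x - (x - t₀)) • (δ / 2) := by simp [smul_eq_mul]
      _ = ∫ _ in (x - t₀)..x, δ / 2 := (intervalIntegral.integral_const _).symm
      _ ≤ _ := this
  have hψxt : 0 ≤ ψ (x - t₀) := hpos _
  have hfinal : t₀ * (δ / 2) ≤ ψ x := by nlinarith [hFTC2, hintlow]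
  have ht₀inv : t₀ * (16 * C₁) = 2 := by rw [ht₀def]; field_simp; ring
  nlinarith [hfinal, ht₀]

/-- If ψ is nonnegative, of class C², and `|ψ''| ≤ C₁(1 + |ψ'|)`, then
`|ψ'| ≤ C (1 + ψ)` for a constant `C > 0` depending only on `C₁`. -/
theorem deriv_le_of_A2 (C₁ : ℝ) (hC₁ : 0 < C₁) :
    ∃ C : ℝ, 0 < C ∧ ∀ ψ : ℝ → ℝ, ContDiff ℝ 2 ψ → (∀ x : ℝ, 0 ≤ ψ x) →
      (∀ x : ℝ, |deriv (deriv ψ) x| ≤ C₁ * (1 + |deriv ψ x|)) →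
      ∀ x : ℝ, |deriv ψ x| ≤ C * (1 + ψ x) := by
  refine ⟨1 + 16 * C₁, by positivity, fun ψ hψ hpos hbd x => ?_⟩
  have hC : (1:ℝ) ≤ 1 + 16 * C₁ := by nlinarith
  have h1ψ : (1:ℝ) ≤ 1 + ψ x := by linarith [hpos x]
  rcases le_or_gt (|deriv ψ x|) 1 with h | h
  · calc |deriv ψ x| ≤ 1 := h
      _ ≤ (1 + 16 * C₁) * (1 + ψ x) := by nlinarith
  · rcases le_or_gt 1 (deriv ψ x) with hp | hn
    · have := key_lemma C₁ hC₁ ψ hψ hpos hbd x hp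
      have habs : |deriv ψ x| = deriv ψ x := abs_of_nonneg (by linarith)
      rw [habs]
      nlinarith [hpos x]
    · -- then deriv ψ x ≤ -1 ; reflect
      have hneg : deriv ψ x ≤ -1 := by
        rcases abs_cases (deriv ψ x) with ⟨he, _⟩ | ⟨he, _⟩
        · linarith [he ▸ h]
        · rw [he] at h; linarith
      set φ : ℝ → ℝ := fun y => ψ (-y) with hφdef
      have hφ : ContDiff ℝ 2 φ := hψ.comp contDiff_neg
      have hdφ : deriv φ = fun y => -deriv ψ (-y) := funext fun y => deriv_comp_neg ψ y
      have hd2φ : ∀ y : ℝ, deriv (deriv φ) y = deriv (deriv ψ) (-y) := by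
        intro y
        rw [hdφ]
        have : deriv (fun y : ℝ => -deriv ψ (-y)) y
            = -deriv (fun y : ℝ => deriv ψ (-y)) y := deriv.neg
        rw [this, deriv_comp_neg (deriv ψ) y, neg_neg]
      have hbdφ : ∀ y : ℝ, |deriv (deriv φ) y| ≤ C₁ * (1 + |deriv φ y|) := by
        intro y
        rw [hd2φ, hdφ]
        simpa using hbd (-y)
      have hposφ : ∀ y : ℝ, 0 ≤ φ y := fun y => hpos (-y)
      have hxφ : 1 ≤ deriv φ (-x) := by
        rw [hdφ]; simpa using by linarith
      have := key_lemma C₁ hC₁ φ hφ hposφ hbdφ (-x) hxφ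
      rw [hdφ] at this
      simp only [neg_neg, hφdef] at this
      have habs : |deriv ψ x| = -deriv ψ x := abs_of_nonpos (by linarith)
      rw [habs]
      nlinarith [hpos x]
end

section
/- Let (D, 𝒜, μ) be a measure space, let (hₙ)_{n∈ℕ} be functions ℝ → ℝ such that each hₙ is Lipschitz continuous with constant Lₙ ≥ 0 and hₙ(1) = 0, with Σ_{n=0}^∞ Lₙ² < ∞, and let ε > 0. Then for every measurable σ : D → ℝ one has Σ_{n=0}^∞ ∫_D s_ε'(σ(ξ)) |hₙ(σ(ξ))|² dμ(ξ) ≤ (Σ_{n=0}^∞ Lₙ²) ∫_D ((σ(ξ) - 1)₊)² dμ(ξ). -/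
open MeasureTheory

/-- The smooth approximation `s_ε` of the positive part `r ↦ (r-1)₊`. -/
noncomputable def sApprox (ε : ℝ) (r : ℝ) : ℝ :=
  if r ≤ 1 then 0 else if r ≤ 1 + ε then (r - 1) ^ 2 / (2 * ε) else r - 1 - ε / 2

lemma hasDerivAt_posSq (x : ℝ) :
    HasDerivAt (fun y : ℝ => (max y 0) ^ 2) (2 * max x 0) x := by
  rcases lt_trichotomy x 0 with hx | hx | hx
  · have : HasDerivAt (fun _ : ℝ => (0:ℝ)) 0 x := hasDerivAt_const x 0
    have h2 : (2 : ℝ) * max x 0 = 0 := by rw [max_eq_right hx.le]; ring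
    rw [h2]
    refine this.congr_of_eventuallyEq ?_
    filter_upwards [Iio_mem_nhds hx] with y hy
    simp [max_eq_right (Set.mem_Iio.mp hy).le]
  · subst hx
    have h2 : (2 : ℝ) * max 0 0 = 0 := by simp
    rw [h2]
    rw [hasDerivAt_iff_tendsto_slope]
    refine squeeze_zero_norm' (a := fun y : ℝ => |y|) ?_ ?_
    · filter_upwards [self_mem_nhdsWithin] with y (hy : y ≠ 0)
      have h1 : (max y 0) ^ 2 ≤ y ^ 2 := by
        rcases le_or_gt y 0 with hy0 | hy0
        · simp [max_eq_right hy0]; positivity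
        · simp [max_eq_left hy0.le]
      have : ‖slope (fun y : ℝ => (max y 0) ^ 2) 0 y‖ = (max y 0) ^ 2 / |y| := by
        simp [slope_def_field, abs_div, abs_of_nonneg (sq_nonneg (max y 0))]
      rw [this]
      rw [div_le_iff₀ (abs_pos.mpr hy)]
      calc (max y 0) ^ 2 ≤ y ^ 2 := h1
        _ = |y| * |y| := by rw [abs_mul_abs_self]; ring
    · have : Filter.Tendsto (fun y : ℝ => |y|) (nhds 0) (nhds 0) := by
        simpa using (continuous_abs.tendsto (0 : ℝ))
      exact this.mono_left nhdsWithin_le_nhds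
  · have : HasDerivAt (fun y : ℝ => y ^ 2) (2 * x) x := by
      simpa using (hasDerivAt_pow 2 x)
    have h2 : (2 : ℝ) * max x 0 = 2 * x := by rw [max_eq_left hx.le]
    rw [h2]
    refine this.congr_of_eventuallyEq ?_
    filter_upwards [Ioi_mem_nhds hx] with y hy
    simp [max_eq_left (le_of_lt (Set.mem_Ioi.mp hy))]

lemma sApprox_eq (ε : ℝ) (hε : 0 < ε) (r : ℝ) :
    sApprox ε r = ((max (r - 1) 0) ^ 2 - (max (r - 1 - ε) 0) ^ 2) / (2 * ε) := by
  unfold sApprox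
  split_ifs with h1 h2
  · rw [max_eq_right (by linarith), max_eq_right (by linarith)]
    simp
  · rw [max_eq_left (by linarith), max_eq_right (by linarith)]
    simp
  · rw [max_eq_left (by linarith), max_eq_left (by linarith)]
    field_simp
    ring

lemma hasDerivAt_sApprox (ε : ℝ) (hε : 0 < ε) (r : ℝ) :
    HasDerivAt (sApprox ε) ((max (r - 1) 0 - max (r - 1 - ε) 0) / ε) r := by
  have A : HasDerivAt (fun y : ℝ => (max (y - 1) 0) ^ 2) (2 * max (r - 1) 0) r := by
    have := (hasDerivAt_posSq (r - 1)).comp r ((hasDerivAt_id r).sub_const 1)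
    simpa [Function.comp_def] using this
  have B : HasDerivAt (fun y : ℝ => (max (y - 1 - ε) 0) ^ 2) (2 * max (r - 1 - ε) 0) r := by
    have := (hasDerivAt_posSq (r - 1 - ε)).comp r (((hasDerivAt_id r).sub_const 1).sub_const ε)
    simpa [Function.comp_def] using this
  have C := (A.sub B).div_const (2 * ε)
  have heq : (2 * max (r - 1) 0 - 2 * max (r - 1 - ε) 0) / (2 * ε)
      = (max (r - 1) 0 - max (r - 1 - ε) 0) / ε := by
    field_simp
  rw [heq] at C
  refine C.congr_of_eventuallyEq ?_
  filter_upwards with y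
  exact sApprox_eq ε hε y

lemma deriv_sApprox (ε : ℝ) (hε : 0 < ε) (r : ℝ) :
    deriv (sApprox ε) r = (max (r - 1) 0 - max (r - 1 - ε) 0) / ε :=
  (hasDerivAt_sApprox ε hε r).deriv

/-- The Itô correction estimate: if each `hₙ` is Lipschitz with constant `Lₙ`,
`hₙ(1) = 0` and `∑ Lₙ² < ∞`, then
`∑ₙ ∫ s_ε'(σ) |hₙ(σ)|² ≤ (∑ₙ Lₙ²) ∫ ((σ-1)₊)²`. -/
theorem ito_correction_estimate {D : Type*} [MeasurableSpace D] (μ : Measure D)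
    (h : ℕ → ℝ → ℝ) (L : ℕ → ℝ) (hL : ∀ n, 0 ≤ L n)
    (hlip : ∀ n, ∀ x y : ℝ, |h n x - h n y| ≤ L n * |x - y|)
    (h1 : ∀ n, h n 1 = 0) (hsum : Summable fun n => (L n) ^ 2)
    (ε : ℝ) (hε : 0 < ε) (σ : D → ℝ) (hσ : Measurable σ) :
    (∑' n : ℕ, ∫⁻ ξ, ENNReal.ofReal (deriv (sApprox ε) (σ ξ) * |h n (σ ξ)| ^ 2) ∂μ)
      ≤ ENNReal.ofReal (∑' n : ℕ, (L n) ^ 2) *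
        ∫⁻ ξ, ENNReal.ofReal ((max (σ ξ - 1) 0) ^ 2) ∂μ := by
  -- pointwise bound
  have key : ∀ n r, deriv (sApprox ε) r * |h n r| ^ 2
      ≤ (L n) ^ 2 * (max (r - 1) 0) ^ 2 := by
    intro n r
    rw [deriv_sApprox ε hε r]
    rcases le_or_gt r 1 with hr | hr
    · have hm1 : max (r - 1) 0 = 0 := max_eq_right (by linarith)
      have hm2 : max (r - 1 - ε) 0 = 0 := max_eq_right (by linarith)
      rw [hm1, hm2]
      simp
    · have hd1 : (max (r - 1) 0 - max (r - 1 - ε) 0) / ε ≤ 1 := by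
        rw [div_le_one hε]
        rcases le_or_gt (r - 1 - ε) 0 with hc | hc
        · rw [max_eq_right hc, max_eq_left (by linarith)]; linarith
        · rw [max_eq_left hc.le, max_eq_left (by linarith)]; linarith
      have hd0 : 0 ≤ (max (r - 1) 0 - max (r - 1 - ε) 0) / ε := by
        apply div_nonneg _ hε.le
        have : max (r - 1 - ε) 0 ≤ max (r - 1) 0 :=
          max_le_max (by linarith) le_rfl
        linarith
      have hh : |h n r| ≤ L n * max (r - 1) 0 := by
        have := hlip n r 1
        rw [h1 n, sub_zero] at this
        rw [max_eq_left (by linarith)]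
        calc |h n r| ≤ L n * |r - 1| := this
          _ = L n * (r - 1) := by rw [abs_of_pos (by linarith)]
      have hh2 : |h n r| ^ 2 ≤ (L n) ^ 2 * (max (r - 1) 0) ^ 2 := by
        have := mul_self_le_mul_self (abs_nonneg _) hh
        calc |h n r| ^ 2 = |h n r| * |h n r| := sq (|h n r|) ▸ by ring
          _ ≤ (L n * max (r - 1) 0) * (L n * max (r - 1) 0) := this
          _ = (L n) ^ 2 * (max (r - 1) 0) ^ 2 := by ring
      calc (max (r - 1) 0 - max (r - 1 - ε) 0) / ε * |h n r| ^ 2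
          ≤ 1 * |h n r| ^ 2 := by
            apply mul_le_mul_of_nonneg_right hd1 (by positivity)
        _ = |h n r| ^ 2 := one_mul _
        _ ≤ (L n) ^ 2 * (max (r - 1) 0) ^ 2 := hh2
  -- integral bound per n
  have step : ∀ n, (∫⁻ ξ, ENNReal.ofReal (deriv (sApprox ε) (σ ξ) * |h n (σ ξ)| ^ 2) ∂μ)
      ≤ ENNReal.ofReal ((L n) ^ 2) * ∫⁻ ξ, ENNReal.ofReal ((max (σ ξ - 1) 0) ^ 2) ∂μ := by
    intro n
    rw [← lintegral_const_mul' _ _ ENNReal.ofReal_ne_top]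
    apply lintegral_mono
    intro ξ
    calc ENNReal.ofReal (deriv (sApprox ε) (σ ξ) * |h n (σ ξ)| ^ 2)
        ≤ ENNReal.ofReal ((L n) ^ 2 * (max (σ ξ - 1) 0) ^ 2) :=
          ENNReal.ofReal_le_ofReal (key n (σ ξ))
      _ = ENNReal.ofReal ((L n) ^ 2) * ENNReal.ofReal ((max (σ ξ - 1) 0) ^ 2) :=
          ENNReal.ofReal_mul (by positivity)
  calc (∑' n : ℕ, ∫⁻ ξ, ENNReal.ofReal (deriv (sApprox ε) (σ ξ) * |h n (σ ξ)| ^ 2) ∂μ)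
      ≤ ∑' n : ℕ, ENNReal.ofReal ((L n) ^ 2) *
          ∫⁻ ξ, ENNReal.ofReal ((max (σ ξ - 1) 0) ^ 2) ∂μ := ENNReal.tsum_le_tsum step
    _ = (∑' n : ℕ, ENNReal.ofReal ((L n) ^ 2)) *
          ∫⁻ ξ, ENNReal.ofReal ((max (σ ξ - 1) 0) ^ 2) ∂μ := ENNReal.tsum_mul_right
    _ = ENNReal.ofReal (∑' n : ℕ, (L n) ^ 2) *
          ∫⁻ ξ, ENNReal.ofReal ((max (σ ξ - 1) 0) ^ 2) ∂μ := by
        rw [ENNReal.ofReal_tsum_of_nonneg (fun n => by positivity) hsum]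
end
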